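/- arXiv:2307.14662 — 3 statements merged into one kernel-verified Lean document; each statement's English description precedes it below -/
import Mathlib

section
/- Let X ~ Exp(1) (central chi-square with 2 DoF after rescaling) and Y noncentral chi-square with 2 DoF and noncentrality τ, independent. Then P(X > Y) = (1/2)·e^{-τ/4}. -/
open MeasureTheory ProbabilityTheory Real

/-- Modified Bessel function of the first kind of order zero:
`I₀(z) = ∑_{k=0}^∞ (z/2)^{2k}/(k!)²`. -/
noncomputable def besselI0 (z : ℝ) : ℝ :=
  ∑' k : ℕ, (z / 2) ^ (2 * k) / ((k.factorial : ℝ) ^ 2)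

open Set

lemma besselI0_nonneg (z : ℝ) : 0 ≤ besselI0 z := by
  refine tsum_nonneg fun k => ?_
  rw [pow_mul]
  positivity

lemma besselI0_sqrt {t : ℝ} (ht : 0 ≤ t) :
    besselI0 (Real.sqrt t) = ∑' k : ℕ, t ^ k / (4 ^ k * ((k.factorial : ℝ)) ^ 2) := by
  unfold besselI0
  refine tsum_congr fun k => ?_
  rw [pow_mul, div_pow, Real.sq_sqrt ht, div_pow, div_div]
  norm_num

lemma summable_aux {t : ℝ} (ht : 0 ≤ t) :
    Summable (fun k : ℕ => t ^ k / (4 ^ k * ((k.factorial : ℝ)) ^ 2)) := by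
  refine Summable.of_nonneg_of_le (fun k => by positivity) (fun k => ?_)
    (Real.summable_pow_div_factorial (t / 4))
  have hk : (1 : ℝ) ≤ (k.factorial : ℝ) := by exact_mod_cast k.factorial_pos
  rw [div_pow, div_div]
  refine div_le_div_of_nonneg_left (by positivity) (by positivity) ?_
  have h4 : (0:ℝ) < 4 ^ k := by positivity
  refine mul_le_mul_of_nonneg_left ?_ h4.le
  nlinarith

lemma tsum_pow_div_factorial' (x : ℝ) :
    ∑' k : ℕ, x ^ k / (k.factorial : ℝ) = Real.exp x := by
  rw [Real.exp_eq_exp_ℝ, NormedSpace.exp_eq_tsum_div]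

lemma integral_pow_exp (k : ℕ) :
    ∫ y in Ioi (0:ℝ), Real.exp (-y) * y ^ k = (k.factorial : ℝ) := by
  have h := Real.Gamma_eq_integral (show (0:ℝ) < (k:ℝ) + 1 by positivity)
  rw [Real.Gamma_nat_eq_factorial] at h
  rw [h]
  refine setIntegral_congr_fun measurableSet_Ioi fun x hx => ?_
  rw [add_sub_cancel_right, Real.rpow_natCast]

lemma integrableOn_pow_exp (k : ℕ) :
    IntegrableOn (fun y : ℝ => Real.exp (-y) * y ^ k) (Ioi 0) := by
  have h := Real.GammaIntegral_convergent (show (0:ℝ) < (k:ℝ) + 1 by positivity)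
  refine h.congr_fun (fun x hx => ?_) measurableSet_Ioi
  rw [add_sub_cancel_right]; simp only [Real.rpow_natCast]

lemma integrableOn_exp_half (y : ℝ) :
    IntegrableOn (fun x : ℝ => (1/2) * Real.exp (-x / 2)) (Ioi y) := by
  have h : IntegrableOn (fun x : ℝ => (1/2) * Real.exp (-(1/2) * x)) (Ioi y) :=
    (exp_neg_integrableOn_Ioi y (by norm_num : (0:ℝ) < 1/2)).const_mul (1/2 : ℝ)
  refine h.congr_fun (fun x _ => ?_) measurableSet_Ioi
  simp only
  rw [show (-(1/2) * x : ℝ) = -x/2 by ring]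

lemma integral_exp_half (y : ℝ) :
    ∫ x in Ioi y, (1/2) * Real.exp (-x / 2) = Real.exp (-y / 2) := by
  have h1 : ∫ x in Ioi y, (1/2) * Real.exp (-x / 2)
      = (1/2) * ∫ x in Ioi y, (fun u => Real.exp (-u)) ((1/2) * x) := by
    rw [← integral_const_mul]
    refine setIntegral_congr_fun measurableSet_Ioi fun x _ => ?_
    simp only
    rw [show (-((1:ℝ)/2 * x) : ℝ) = -x/2 by ring]
  rw [h1, integral_comp_mul_left_Ioi (fun u => Real.exp (-u)) y (by norm_num : (0:ℝ) < 1/2),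
    integral_exp_neg_Ioi, smul_eq_mul, show (-((1:ℝ)/2 * y) : ℝ) = -y/2 by ring]
  ring

lemma measurable_gY {τ : ℝ} (hτ : 0 ≤ τ) :
    Measurable (fun y : ℝ => ENNReal.ofReal
      (if 0 ≤ y then (1 / 2) * Real.exp (-(y + τ) / 2) * besselI0 (Real.sqrt (τ * y))
       else 0)) := by
  have heq : (fun y : ℝ => ENNReal.ofReal
      (if 0 ≤ y then (1 / 2) * Real.exp (-(y + τ) / 2) * besselI0 (Real.sqrt (τ * y)) else 0))
      = (Ici (0:ℝ)).indicator (fun y => ENNReal.ofReal ((1/2) * Real.exp (-(y + τ) / 2)) *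
          ∑' k : ℕ, ENNReal.ofReal ((τ * y) ^ k / (4 ^ k * ((k.factorial : ℝ)) ^ 2))) := by
    ext y
    by_cases hy : 0 ≤ y
    · rw [indicator_of_mem (mem_Ici.mpr hy), if_pos hy]
      have hty : 0 ≤ τ * y := mul_nonneg hτ hy
      rw [ENNReal.ofReal_mul (by positivity), besselI0_sqrt hty,
        ENNReal.ofReal_tsum_of_nonneg (fun k => by positivity) (summable_aux hty)]
    · rw [indicator_of_notMem (by simpa using hy), if_neg hy, ENNReal.ofReal_zero]
  rw [heq]
  refine Measurable.indicator (Measurable.mul ?_ (Measurable.ennreal_tsum fun k => ?_))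
    measurableSet_Ici
  · fun_prop
  · fun_prop


/-- if `X` has density `(1/2)e^{-x/2}` on `[0,∞)` (central chi-square, 2 DoF)
and `Y` has density `(1/2)e^{-(y+τ)/2} I₀(√(τy))` on `[0,∞)` (noncentral chi-square, 2 DoF,
noncentrality `τ`), `X, Y` independent, then `P(X > Y) = (1/2)e^{-τ/4}`. -/
theorem stmt8 {Ω : Type*} [MeasureSpace Ω] [IsProbabilityMeasure (ℙ : Measure Ω)]
    (τ : ℝ) (hτ : 0 ≤ τ) (X Y : Ω → ℝ) (hX : Measurable X) (hY : Measurable Y)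
    (hindep : IndepFun X Y ℙ)
    (hXlaw : Measure.map X ℙ = (volume : Measure ℝ).withDensity
      (fun x => ENNReal.ofReal (if 0 ≤ x then (1 / 2) * Real.exp (-x / 2) else 0)))
    (hYlaw : Measure.map Y ℙ = (volume : Measure ℝ).withDensity
      (fun y => ENNReal.ofReal
        (if 0 ≤ y then (1 / 2) * Real.exp (-(y + τ) / 2) * besselI0 (Real.sqrt (τ * y))
         else 0))) :
    ℙ {ω | X ω > Y ω} = ENNReal.ofReal ((1 / 2) * Real.exp (-τ / 4)) := by
  haveI hPX : IsProbabilityMeasure (Measure.map X ℙ) := Measure.isProbabilityMeasure_map hX.aemeasurable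
  haveI hPY : IsProbabilityMeasure (Measure.map Y ℙ) := Measure.isProbabilityMeasure_map hY.aemeasurable
  set μ := Measure.map X ℙ with hμ
  set ν := Measure.map Y ℙ with hν
  have hs2 : MeasurableSet {p : ℝ × ℝ | p.2 < p.1} :=
    measurableSet_lt measurable_snd measurable_fst
  have hs1 : MeasurableSet {p : ℝ × ℝ | p.1 < p.2} :=
    measurableSet_lt measurable_fst measurable_snd
  have hset : {ω | X ω > Y ω} = (fun ω => (X ω, Y ω)) ⁻¹' {p : ℝ × ℝ | p.2 < p.1} := rfl
  have hjoint := (indepFun_iff_map_prod_eq_prod_map_map hX.aemeasurable hY.aemeasurable).mp hindep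
  rw [hset, ← Measure.map_apply (hX.prodMk hY) hs2, hjoint]
  have hswap : μ.prod ν = Measure.map Prod.swap (ν.prod μ) := (Measure.prod_swap).symm
  rw [hswap, Measure.map_apply measurable_swap hs2]
  have hpre : Prod.swap ⁻¹' {p : ℝ × ℝ | p.2 < p.1} = {p : ℝ × ℝ | p.1 < p.2} := rfl
  rw [hpre, Measure.prod_apply hs1]
  have hfib : ∀ y : ℝ, (Prod.mk y ⁻¹' {p : ℝ × ℝ | p.1 < p.2}) = Ioi y := fun _ => rfl
  simp_rw [hfib]
  -- tail probability of X
  have hIoi : ∀ y : ℝ, 0 ≤ y → μ (Ioi y) = ENNReal.ofReal (Real.exp (-y / 2)) := by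
    intro y hy
    rw [hXlaw, withDensity_apply _ measurableSet_Ioi,
      setLIntegral_congr_fun measurableSet_Ioi (fun x hx => by
        rw [if_pos (hy.trans (le_of_lt hx))]),
      ← ofReal_integral_eq_lintegral_ofReal (integrableOn_exp_half y)
        (ae_of_all _ fun x => by positivity), integral_exp_half]
  -- plug in the density of Y
  rw [hYlaw, lintegral_withDensity_eq_lintegral_mul volume (measurable_gY hτ)
    (Antitone.measurable fun a b hab => measure_mono (Ioi_subset_Ioi hab))]
  have hpt : ∀ y : ℝ, ((fun y : ℝ => ENNReal.ofReal
        (if 0 ≤ y then (1 / 2) * Real.exp (-(y + τ) / 2) * besselI0 (Real.sqrt (τ * y))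
         else 0)) * fun y => μ (Ioi y)) y
      = (Ici (0:ℝ)).indicator (fun y => ENNReal.ofReal
          ((1/2) * Real.exp (-(y + τ) / 2) * besselI0 (Real.sqrt (τ * y)) * Real.exp (-y / 2)))
        y := by
    intro y
    by_cases hy : 0 ≤ y
    · simp only [Pi.mul_apply, if_pos hy, indicator_of_mem (mem_Ici.mpr hy)]
      rw [hIoi y hy, ← ENNReal.ofReal_mul
        (mul_nonneg (by positivity) (besselI0_nonneg _))]
    · simp only [Pi.mul_apply, if_neg hy, ENNReal.ofReal_zero, zero_mul,
        indicator_of_notMem (show y ∉ Ici (0:ℝ) by simpa using hy)]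
  rw [lintegral_congr hpt, lintegral_indicator measurableSet_Ici _,
    ← setLIntegral_congr (Ioi_ae_eq_Ici (a := (0:ℝ)))]
  -- expand as a series
  set c : ℕ → ℝ := fun k => (1/2) * Real.exp (-τ/2) * (τ^k / (4^k * ((k.factorial:ℝ))^2))
    with hc
  have hck : ∀ k : ℕ, 0 ≤ c k := fun k => by rw [hc]; positivity
  have hterm : ∀ y ∈ Ioi (0:ℝ),
      ENNReal.ofReal ((1/2) * Real.exp (-(y + τ) / 2) * besselI0 (Real.sqrt (τ * y)) *
        Real.exp (-y / 2))
      = ∑' k : ℕ, ENNReal.ofReal (c k * (Real.exp (-y) * y ^ k)) := by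
    intro y hy
    have hy0 : (0:ℝ) ≤ y := le_of_lt hy
    have hty : 0 ≤ τ * y := mul_nonneg hτ hy0
    have hexp : Real.exp (-(y + τ) / 2) * Real.exp (-y / 2)
        = Real.exp (-τ/2) * Real.exp (-y) := by
      rw [← Real.exp_add, ← Real.exp_add]; congr 1; ring
    have hsum : Summable (fun k : ℕ => c k * (Real.exp (-y) * y ^ k)) := by
      refine ((summable_aux hty).mul_left
        ((1/2) * Real.exp (-τ/2) * Real.exp (-y))).congr fun k => ?_
      rw [hc]; simp only; rw [mul_pow]; ring
    have hreal : (1/2) * Real.exp (-(y + τ) / 2) * besselI0 (Real.sqrt (τ * y)) *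
          Real.exp (-y / 2)
        = ∑' k : ℕ, c k * (Real.exp (-y) * y ^ k) := by
      have hS : ∀ S : ℝ, (1/2) * Real.exp (-(y + τ) / 2) * S * Real.exp (-y / 2)
          = ((1/2) * (Real.exp (-(y + τ) / 2) * Real.exp (-y / 2))) * S := fun S => by ring
      rw [besselI0_sqrt hty, hS, hexp, ← tsum_mul_left]
      refine tsum_congr fun k => ?_
      rw [hc]; simp only; rw [mul_pow]; ring
    rw [hreal, ENNReal.ofReal_tsum_of_nonneg
      (fun k => mul_nonneg (hck k) (by positivity)) hsum]
  rw [setLIntegral_congr_fun measurableSet_Ioi hterm,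
    lintegral_tsum (fun k => Measurable.aemeasurable (by fun_prop))]
  -- compute each integral
  have hint : ∀ k : ℕ, ∫⁻ y in Ioi (0:ℝ), ENNReal.ofReal (c k * (Real.exp (-y) * y ^ k))
      = ENNReal.ofReal (c k * (k.factorial : ℝ)) := by
    intro k
    rw [← ofReal_integral_eq_lintegral_ofReal ((integrableOn_pow_exp k).const_mul (c k))
      ((ae_restrict_iff' measurableSet_Ioi).mpr (ae_of_all _ fun y hy =>
        mul_nonneg (hck k) (mul_nonneg (Real.exp_pos _).le
          (pow_nonneg (le_of_lt (mem_Ioi.mp hy)) k)))),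
      integral_const_mul, integral_pow_exp]
  rw [tsum_congr hint]
  -- sum the series
  have hck' : ∀ k : ℕ, c k * (k.factorial : ℝ)
      = ((1/2) * Real.exp (-τ/2)) * ((τ/4)^k / (k.factorial : ℝ)) := by
    intro k
    have hkf : ((k.factorial : ℝ)) ≠ 0 := Nat.cast_ne_zero.mpr k.factorial_ne_zero
    rw [hc]; simp only; rw [div_pow]; field_simp
  have hsum2 : Summable (fun k : ℕ => c k * (k.factorial : ℝ)) :=
    (((Real.summable_pow_div_factorial (τ/4)).mul_left
      ((1/2) * Real.exp (-τ/2)))).congr fun k => (hck' k).symm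
  rw [← ENNReal.ofReal_tsum_of_nonneg
    (fun k => mul_nonneg (hck k) (Nat.cast_nonneg _)) hsum2]
  congr 1
  calc ∑' k : ℕ, c k * (k.factorial : ℝ)
      = ∑' k : ℕ, ((1/2) * Real.exp (-τ/2)) * ((τ/4)^k / (k.factorial : ℝ)) :=
        tsum_congr hck'
    _ = ((1/2) * Real.exp (-τ/2)) * Real.exp (τ/4) := by
        rw [tsum_mul_left, tsum_pow_div_factorial']
    _ = (1/2) * Real.exp (-τ/4) := by
        rw [mul_assoc, ← Real.exp_add, show (-τ/2 + τ/4 : ℝ) = -τ/4 by ring]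
end

section
/- The two closed-form expressions for the UPEP (when l̂ = l) obtained by the PDF method and the MGF method are equal: (L!/(2(l-1)!)) ∑_{k=0}^{L-l} ((-1)^k/(k!(L-l-k)!(k+l)))(1 - √(c/(c+k+l))) = (1/2)∑_{ς=1}^{L̇}(1 - √(c_ς/(1+c_ς))) ∏_{ν≠ς}(c_ς/(c_ς - c_ν)), where L̇ = L-l+1, c_ς = c/(ς+l-1), c_ν = c/(ν+l-1), for any c > 0 with all c_ς distinct. -/
open Real

lemma fact_prod (k : ℕ) : ∏ i ∈ Finset.range k, ((i : ℝ) + 1) = k.factorial := by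
  induction k with
  | zero => simp
  | succ k ih => rw [Finset.prod_range_succ, ih, Nat.factorial_succ]; push_cast; ring

lemma aux1 (j n : ℕ) : ∏ ν ∈ Finset.Icc 1 n, ((ν : ℝ) + j) = (n + j).factorial / j.factorial := by
  induction n with
  | zero => simp [div_self (Nat.cast_ne_zero.mpr j.factorial_ne_zero : (j.factorial:ℝ) ≠ 0)]
  | succ n ih =>
    rw [Finset.prod_Icc_succ_top (by omega), ih, show n + 1 + j = (n + j) + 1 by omega,
      Nat.factorial_succ]
    have : (j.factorial : ℝ) ≠ 0 := Nat.cast_ne_zero.mpr j.factorial_ne_zero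
    push_cast
    field_simp
    ring

lemma aux2 (k : ℕ) : ∏ ν ∈ Finset.Icc 1 k, ((ν : ℝ) - (k + 1)) = (-1) ^ k * k.factorial := by
  have h1 : ∏ ν ∈ Finset.Icc 1 k, ((ν : ℝ) - (k + 1)) = ∏ i ∈ Finset.range k, ((i : ℝ) - k) := by
    refine Finset.prod_nbij' (fun ν => ν - 1) (fun i => i + 1) ?_ ?_ ?_ ?_ ?_ <;>
      intro a ha <;> simp [Finset.mem_Icc, Finset.mem_range] at * <;> try omega
    have : (1:ℕ) ≤ a := ha.1
    have : ((a - 1 : ℕ) : ℝ) = (a : ℝ) - 1 := by push_cast [Nat.cast_sub this]; ring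
    rw [this]; ring
  have h2 : ∏ i ∈ Finset.range k, ((i : ℝ) - k) = (-1) ^ k * ∏ i ∈ Finset.range k, ((k : ℝ) - i) := by
    rw [show ((-1:ℝ))^k = ∏ _i ∈ Finset.range k, (-1:ℝ) by simp, ← Finset.prod_mul_distrib]
    exact Finset.prod_congr rfl fun i _ => by ring
  have h3 : ∏ i ∈ Finset.range k, ((k : ℝ) - i) = k.factorial := by
    rw [← fact_prod k, ← Finset.prod_range_reflect (fun i => (i : ℝ) + 1) k]
    refine Finset.prod_congr rfl fun i hi => ?_
    simp only [Finset.mem_range] at hi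
    have : ((k - 1 - i : ℕ) : ℝ) = (k : ℝ) - 1 - i := by
      have : (1:ℕ) + i ≤ k := by omega
      push_cast [Nat.cast_sub (by omega : i ≤ k - 1), Nat.cast_sub (by omega : 1 ≤ k)]; ring
    rw [this]; ring
  rw [h1, h2, h3]

lemma aux3 (k m : ℕ) (h : k ≤ m) :
    ∏ ν ∈ Finset.Icc (k + 2) (m + 1), ((ν : ℝ) - (k + 1)) = (m - k).factorial := by
  rw [← fact_prod (m - k)]
  refine Finset.prod_nbij' (fun ν => ν - (k + 2)) (fun i => i + (k + 2)) ?_ ?_ ?_ ?_ ?_ <;>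
    intro a ha <;> simp [Finset.mem_Icc, Finset.mem_range] at * <;> try omega
  have h2 : (k:ℕ) + 2 ≤ a := ha.1
  have : ((a - (k + 2) : ℕ) : ℝ) = (a : ℝ) - (k + 2) := by push_cast [Nat.cast_sub h2]; ring
  rw [this]; ring

lemma keyprod (m j k : ℕ) (hk : k ≤ m) (c : ℝ) (hc : 0 < c) :
    ∏ ν ∈ (Finset.Icc 1 (m + 1)).erase (k + 1),
      (c / ((k : ℝ) + 1 + j)) / (c / ((k : ℝ) + 1 + j) - c / ((ν : ℝ) + j))
    = ((m + j + 1).factorial : ℝ) /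
        (j.factorial * ((k : ℝ) + j + 1) * ((-1) ^ k * k.factorial * (m - k).factorial)) := by
  have hstep : ∏ ν ∈ (Finset.Icc 1 (m + 1)).erase (k + 1),
      (c / ((k : ℝ) + 1 + j)) / (c / ((k : ℝ) + 1 + j) - c / ((ν : ℝ) + j))
      = ∏ ν ∈ (Finset.Icc 1 (m + 1)).erase (k + 1), ((ν : ℝ) + j) / ((ν : ℝ) - (k + 1)) := by
    refine Finset.prod_congr rfl fun ν hν => ?_
    simp only [Finset.mem_erase, Finset.mem_Icc] at hν
    have h1 : (1:ℕ) ≤ ν := hν.2.1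
    have ha : ((k : ℝ) + 1 + j) ≠ 0 := by positivity
    have hb : ((ν : ℝ) + j) ≠ 0 := by
      have : (1:ℝ) ≤ (ν:ℝ) := by exact_mod_cast h1
      positivity
    have hba : (ν : ℝ) - (k + 1) ≠ 0 := by
      have : (ν : ℝ) ≠ ((k + 1 : ℕ) : ℝ) := by exact_mod_cast hν.1
      push_cast at this
      intro h; apply this; linarith
    have hd : c / ((k : ℝ) + 1 + j) - c / ((ν : ℝ) + j)
        = c * ((ν : ℝ) - (k + 1)) / (((k : ℝ) + 1 + j) * ((ν : ℝ) + j)) := by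
      field_simp; ring
    rw [hd]
    rw [div_div_div_eq]
    rw [div_eq_div_iff (mul_ne_zero ha (mul_ne_zero hc.ne' hba)) hba]
    ring
  rw [hstep, Finset.prod_div_distrib]
  have hmem : k + 1 ∈ Finset.Icc 1 (m + 1) := by simp [Finset.mem_Icc]; omega
  have hnum : ∏ ν ∈ (Finset.Icc 1 (m + 1)).erase (k + 1), ((ν : ℝ) + j)
      = ((m + j + 1).factorial : ℝ) / (j.factorial * ((k : ℝ) + j + 1)) := by
    have := Finset.mul_prod_erase (Finset.Icc 1 (m + 1)) (fun ν => ((ν : ℝ) + j)) hmem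
    rw [aux1 j (m + 1)] at this
    have hk1 : ((k:ℝ) + 1 + j) ≠ 0 := by positivity
    have hj : (j.factorial : ℝ) ≠ 0 := Nat.cast_ne_zero.mpr j.factorial_ne_zero
    field_simp at this ⊢
    push_cast at this ⊢
    rw [show m + 1 + j = m + j + 1 by omega] at this
    nlinarith [this]
  have hsplit : (Finset.Icc 1 (m + 1)).erase (k + 1)
      = Finset.Icc 1 k ∪ Finset.Icc (k + 2) (m + 1) := by
    ext ν; simp [Finset.mem_erase, Finset.mem_Icc, Finset.mem_union]; omega
  have hden : ∏ ν ∈ (Finset.Icc 1 (m + 1)).erase (k + 1), ((ν : ℝ) - (k + 1))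
      = (-1) ^ k * k.factorial * (m - k).factorial := by
    rw [hsplit, Finset.prod_union (by
      rw [Finset.disjoint_left]; intro a ha hb
      simp [Finset.mem_Icc] at ha hb; omega), aux2 k, aux3 k m hk]
  rw [hnum, hden, div_div]

lemma term_eq (m j k : ℕ) (hk : k ≤ m) (c : ℝ) (hc : 0 < c) :
    ((m + (j + 1)).factorial : ℝ) / (2 * j.factorial) *
      ((-1:ℝ) ^ k / ((k.factorial : ℝ) * ((m - k).factorial : ℝ) * ((k : ℝ) + ((j:ℝ) + 1))) *
        (1 - Real.sqrt (c / (c + (k : ℝ) + ((j:ℝ) + 1)))))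
  = 1/2 * ((1 - Real.sqrt ((c / ((k:ℝ) + 1 + j)) / (1 + c / ((k:ℝ) + 1 + j)))) *
      ∏ ν ∈ (Finset.Icc 1 (m+1)).erase (k+1),
        (c / ((k:ℝ) + 1 + j)) / (c / ((k:ℝ) + 1 + j) - c / ((ν:ℝ) + j))) := by
  rw [keyprod m j k hk c hc]
  have ha : (0:ℝ) < (k:ℝ) + 1 + j := by positivity
  have hsq : (c / ((k:ℝ)+1+j)) / (1 + c / ((k:ℝ)+1+j)) = c / (c + k + ((j:ℝ)+1)) := by
    have h1 : (0:ℝ) < c + k + ((j:ℝ)+1) := by positivity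
    have hX : (1:ℝ) + c/((k:ℝ)+1+j) = (c + k + ((j:ℝ)+1))/((k:ℝ)+1+j) := by
      rw [eq_div_iff ha.ne', add_mul, div_mul_cancel₀ _ ha.ne']; ring
    rw [hX, div_div_div_eq, mul_comm c ((k:ℝ)+1+↑j), mul_div_mul_left _ _ ha.ne']
  rw [hsq]
  have h1 : ((-1:ℝ))^k ≠ 0 := pow_ne_zero _ (by norm_num)
  have h2 : ((-1:ℝ))^k * (-1)^k = 1 := by
    rw [← pow_add]; exact Even.neg_one_pow ⟨k, by ring⟩
  have hf1 : (j.factorial : ℝ) ≠ 0 := Nat.cast_ne_zero.mpr j.factorial_ne_zero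
  have hf2 : (k.factorial : ℝ) ≠ 0 := Nat.cast_ne_zero.mpr k.factorial_ne_zero
  have hf3 : ((m-k).factorial : ℝ) ≠ 0 := Nat.cast_ne_zero.mpr (m-k).factorial_ne_zero
  have ha2 : ((k:ℝ) + j + 1) ≠ 0 := by positivity
  have ha3 : ((k:ℝ) + ((j:ℝ)+1)) ≠ 0 := by positivity
  field_simp
  ring_nf
  simp only [pow_mul', neg_one_sq, one_pow, mul_one, one_mul]
  ring


/-- the PDF-method and MGF-method closed forms of the UPEP (case `l̂ = l`)
coincide. Here `L̇ = L - l + 1`, `c_ς = c/(ς+l-1)`, `c_ν = c/(ν+l-1)`. -/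
theorem stmt12 (L l : ℕ) (hl : 1 ≤ l) (hL : l ≤ L) (c : ℝ) (hc : 0 < c)
    (hdist : ∀ ς ∈ Finset.Icc 1 (L - l + 1), ∀ ν ∈ Finset.Icc 1 (L - l + 1), ς ≠ ν →
      c / ((ς : ℝ) + l - 1) ≠ c / ((ν : ℝ) + l - 1)) :
    ((L.factorial : ℝ) / (2 * (l - 1).factorial)) *
        ∑ k ∈ Finset.range (L - l + 1),
          (-1 : ℝ) ^ k / ((k.factorial : ℝ) * (L - l - k).factorial * ((k : ℝ) + l)) *
            (1 - Real.sqrt (c / (c + (k : ℝ) + l)))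
      = (1 / 2) * ∑ ς ∈ Finset.Icc 1 (L - l + 1),
          (1 - Real.sqrt ((c / ((ς : ℝ) + l - 1)) / (1 + c / ((ς : ℝ) + l - 1)))) *
            ∏ ν ∈ (Finset.Icc 1 (L - l + 1)).erase ς,
              (c / ((ς : ℝ) + l - 1)) /
                (c / ((ς : ℝ) + l - 1) - c / ((ν : ℝ) + l - 1)) := by
  clear hdist
  obtain ⟨j, rfl⟩ : ∃ j, l = j + 1 := ⟨l - 1, by omega⟩
  obtain ⟨m, rfl⟩ : ∃ m, L = m + (j + 1) := ⟨L - (j + 1), by omega⟩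
  simp only [show m + (j + 1) - (j + 1) = m by omega, show j + 1 - 1 = j by omega]
  rw [Finset.mul_sum, Finset.mul_sum]
  refine Finset.sum_nbij' (fun k => k + 1) (fun ς => ς - 1) ?_ ?_ ?_ ?_ ?_ <;>
    intro a ha <;> simp only [Finset.mem_Icc, Finset.mem_range] at * <;> try omega
  have hkm : a ≤ m := by omega
  have e1 : ∀ x : ℝ, x + ((j:ℝ) + 1) - 1 = x + j := fun x => by ring
  push_cast
  simp only [e1]
  have := term_eq m j a hkm c hc
  rw [show (a:ℝ) + 1 + (j:ℝ) = (a:ℝ) + (j:ℝ) + 1 by ring] at this ⊢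
  convert this using 2 <;> push_cast <;> ring_nf
end

section
/- Asymptotic UPEP (l̂ = l case): as ρ → ∞, the expression (1/π)∫₀^{π/2} ∏_{ξ=l}^{L} sin²θ/(sin²θ + ρc/(4ξ)) dθ is asymptotically equal to ((2L̇-1)!!/(2(2L̇)!!))·(Γ(L+1)/Γ(l))·(4/(ρc))^{L̇}, where L̇ = L - l + 1 and c > 0 is fixed; i.e., the ratio of the two quantities tends to 1. -/
open Real Filter

private lemma wallis_half (n : ℕ) :
    ∫ θ in (0:ℝ)..(π/2), Real.sin θ ^ (2*n)
      = (π/2) * ∏ i ∈ Finset.range n, (2*(i:ℝ)+1)/(2*(i:ℝ)+2) := by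
  induction n with
  | zero => simp
  | succ n ih =>
      have h := integral_sin_pow (a := 0) (b := π/2) (2*n)
      rw [show 2*(n+1) = 2*n+2 by ring, h, ih, Finset.prod_range_succ]
      simp only [Real.cos_pi_div_two, Real.sin_zero, zero_pow (Nat.succ_ne_zero _), mul_zero,
        zero_mul, sub_zero, zero_div, zero_add]
      push_cast
      ring

private lemma ddf (m : ℕ) :
    ((Nat.doubleFactorial (2*(m+1) - 1) : ℝ)) / (2 * (Nat.doubleFactorial (2*(m+1)) : ℝ))
      = (∏ i ∈ Finset.range (m+1), (2*(i:ℝ)+1)/(2*(i:ℝ)+2)) / 2 := by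
  induction m with
  | zero => norm_num [Nat.doubleFactorial]
  | succ m ih =>
      rw [show 2*(m+1+1) - 1 = (2*m+1)+2 by omega, show 2*(m+1+1) = (2*m+2)+2 by ring,
        Nat.doubleFactorial_add_two, Nat.doubleFactorial_add_two, Finset.prod_range_succ]
      rw [show 2*(m+1) - 1 = 2*m+1 by omega, show 2*(m+1) = 2*m+2 by ring] at ih
      have hB : ((Nat.doubleFactorial (2*m+2) : ℝ)) ≠ 0 := by
        exact_mod_cast (Nat.doubleFactorial_pos _).ne'
      have hP : (∏ i ∈ Finset.range (m+1), (2*(i:ℝ)+1)/(2*(i:ℝ)+2))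
          = ((Nat.doubleFactorial (2*m+1) : ℝ)) / ((Nat.doubleFactorial (2*m+2) : ℝ)) := by
        field_simp at ih ⊢
        linarith
      rw [hP]
      push_cast
      field_simp
      ring

private lemma fact_prod_s14 (l : ℕ) (hl : 1 ≤ l) :
    ∀ L, l ≤ L + 1 → (l-1).factorial * ∏ ξ ∈ Finset.Icc l L, ξ = L.factorial := by
  intro L
  induction L with
  | zero =>
      intro h
      interval_cases l
      simp
  | succ L ih =>
      intro h
      rcases eq_or_lt_of_le h with heq | hlt
      · subst heq
        rw [Finset.Icc_eq_empty (by omega), Finset.prod_empty, mul_one]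
        congr 1
      · have h' : l ≤ L + 1 := by omega
        rw [Finset.prod_Icc_succ_top h', ← mul_assoc, ih (by omega), Nat.factorial_succ]
        ring

private lemma gamma_ratio (L l : ℕ) (hl : 1 ≤ l) (hL : l ≤ L) :
    Real.Gamma ((L:ℝ) + 1) / Real.Gamma (l:ℝ) = ∏ ξ ∈ Finset.Icc l L, (ξ:ℝ) := by
  have h1 : Real.Gamma ((L:ℝ)+1) = L.factorial := Real.Gamma_nat_eq_factorial L
  have h2 : Real.Gamma (l:ℝ) = (l-1).factorial := by
    obtain ⟨k, rfl⟩ : ∃ k, l = k + 1 := ⟨l-1, by omega⟩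
    rw [show ((k+1 : ℕ):ℝ) = (k:ℝ)+1 by push_cast; ring, Real.Gamma_nat_eq_factorial]
    simp
  have key := fact_prod_s14 l hl L (by omega)
  have hne : ((l-1).factorial : ℝ) ≠ 0 := by exact_mod_cast (Nat.factorial_pos _).ne'
  rw [h1, h2, div_eq_iff hne]
  have : ((l-1).factorial * ∏ ξ ∈ Finset.Icc l L, ξ : ℕ) = (L.factorial : ℕ) := key
  push_cast [← this]
  ring


/-- asymptotic UPEP, `l̂ = l` case: as `ρ → ∞`,
`(1/π)∫₀^{π/2} ∏_{ξ=l}^{L} sin²θ/(sin²θ + ρc/(4ξ)) dθ` is asymptotically equal to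
`((2L̇-1)!!/(2(2L̇)!!))·(Γ(L+1)/Γ(l))·(4/(ρc))^{L̇}` with `L̇ = L - l + 1`,
i.e. the ratio tends to `1`. -/
theorem stmt14 (L l : ℕ) (hl : 1 ≤ l) (hL : l ≤ L) (c : ℝ) (hc : 0 < c) :
    Tendsto (fun ρ : ℝ =>
        ((1 / π) * ∫ θ in (0:ℝ)..(π / 2),
            ∏ ξ ∈ Finset.Icc l L, Real.sin θ ^ 2 / (Real.sin θ ^ 2 + ρ * c / (4 * ξ))) /
          (((Nat.doubleFactorial (2 * (L - l + 1) - 1) : ℝ) /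
              (2 * (Nat.doubleFactorial (2 * (L - l + 1)) : ℝ))) *
            (Real.Gamma (L + 1) / Real.Gamma l) * (4 / (ρ * c)) ^ (L - l + 1)))
      atTop (nhds 1) := by
  obtain ⟨m, hm⟩ : ∃ m, L - l + 1 = m + 1 := ⟨L - l, rfl⟩
  simp only [hm]
  have hπ : (π:ℝ) ≠ 0 := Real.pi_ne_zero
  have hcard : (Finset.Icc l L).card = m + 1 := by rw [Nat.card_Icc]; omega
  set Q : ℝ := ∏ i ∈ Finset.range (m+1), (2*(i:ℝ)+1)/(2*(i:ℝ)+2) with hQdef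
  have hQpos : 0 < Q := Finset.prod_pos (fun i _ => by positivity)
  have hW : (∫ θ in (0:ℝ)..(π/2), Real.sin θ ^ (2*(m+1))) = (π/2) * Q := wallis_half (m+1)
  have hdd : ((Nat.doubleFactorial (2*(m+1) - 1) : ℝ)) / (2 * (Nat.doubleFactorial (2*(m+1)) : ℝ))
      = Q / 2 := by rw [hQdef]; exact ddf m
  clear_value Q
  clear hQdef
  -- positivity of ξ for ξ in Icc
  have hxi : ∀ ξ ∈ Finset.Icc l L, (0:ℝ) < ξ := by
    intro ξ hξ
    have h1 := (Finset.mem_Icc.mp hξ).1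
    have : 0 < ξ := by omega
    exact_mod_cast this
  -- product rewriting helper
  have hprodmul : ∀ (x : ℝ) (b : ℕ → ℝ),
      ∏ ξ ∈ Finset.Icc l L, (x * b ξ) = x ^ (m+1) * ∏ ξ ∈ Finset.Icc l L, b ξ := by
    intro x b
    rw [Finset.prod_mul_distrib, Finset.prod_const, hcard]
  -- denominator identity
  have hD : ∀ ρ : ℝ,
      (((Nat.doubleFactorial (2 * (m + 1) - 1) : ℝ) /
          (2 * (Nat.doubleFactorial (2 * (m + 1)) : ℝ))) *
        (Real.Gamma (L + 1) / Real.Gamma l) * (4 / (ρ * c)) ^ (m + 1))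
      = (1/π) * ((π/2) * Q * ∏ ξ ∈ Finset.Icc l L, (4*(ξ:ℝ)/(ρ*c))) := by
    intro ρ
    have h1 : ∀ ξ ∈ Finset.Icc l L, 4*(ξ:ℝ)/(ρ*c) = (ξ:ℝ) * (4/(ρ*c)) := by
      intro ξ _; ring
    rw [Finset.prod_congr rfl h1, Finset.prod_mul_distrib, Finset.prod_const, hcard,
      hdd, gamma_ratio L l hl hL]
    rw [← mul_assoc (1/π)]
    have hhalf : (1/π) * ((π/2)*Q) = Q/2 := by field_simp
    rw [hhalf]
    ring
  have key : ∀ ρ : ℝ, 0 < ρ →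
      (∏ ξ ∈ Finset.Icc l L, (ρ*c/(4*(ξ:ℝ)))/(1+ρ*c/(4*(ξ:ℝ)))) ≤
        ((1 / π) * ∫ θ in (0:ℝ)..(π / 2),
            ∏ ξ ∈ Finset.Icc l L, Real.sin θ ^ 2 / (Real.sin θ ^ 2 + ρ * c / (4 * ξ))) /
          (((Nat.doubleFactorial (2 * (m + 1) - 1) : ℝ) /
              (2 * (Nat.doubleFactorial (2 * (m + 1)) : ℝ))) *
            (Real.Gamma (L + 1) / Real.Gamma l) * (4 / (ρ * c)) ^ (m + 1)) ∧
      ((1 / π) * ∫ θ in (0:ℝ)..(π / 2),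
            ∏ ξ ∈ Finset.Icc l L, Real.sin θ ^ 2 / (Real.sin θ ^ 2 + ρ * c / (4 * ξ))) /
          (((Nat.doubleFactorial (2 * (m + 1) - 1) : ℝ) /
              (2 * (Nat.doubleFactorial (2 * (m + 1)) : ℝ))) *
            (Real.Gamma (L + 1) / Real.Gamma l) * (4 / (ρ * c)) ^ (m + 1)) ≤ 1 := by
    intro ρ hρ
    have haξ : ∀ ξ ∈ Finset.Icc l L, 0 < ρ*c/(4*(ξ:ℝ)) := by
      intro ξ hξ
      have := hxi ξ hξ
      positivity
    have hcont : Continuous (fun θ : ℝ =>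
        ∏ ξ ∈ Finset.Icc l L, Real.sin θ ^ 2 / (Real.sin θ ^ 2 + ρ * c / (4 * ξ))) := by
      apply continuous_finset_prod
      intro ξ hξ
      have ha := haξ ξ hξ
      exact (continuous_sin.pow 2).div ((continuous_sin.pow 2).add continuous_const)
        (fun θ => by positivity)
    set Cl : ℝ := ∏ ξ ∈ Finset.Icc l L, (1+ρ*c/(4*(ξ:ℝ)))⁻¹ with hCldef
    set Cu : ℝ := ∏ ξ ∈ Finset.Icc l L, (4*(ξ:ℝ)/(ρ*c)) with hCudef
    have hCl : 0 < Cl := Finset.prod_pos (fun ξ hξ => by have := haξ ξ hξ; positivity)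
    have hCu : 0 < Cu := Finset.prod_pos (fun ξ hξ => by have := hxi ξ hξ; positivity)
    -- pointwise bounds
    have hlowpt : ∀ θ ∈ Set.Icc (0:ℝ) (π/2),
        Real.sin θ ^ (2*(m+1)) * Cl ≤
          ∏ ξ ∈ Finset.Icc l L, Real.sin θ ^ 2 / (Real.sin θ ^ 2 + ρ * c / (4 * ξ)) := by
      intro θ _
      rw [pow_mul, hCldef, ← hprodmul]
      apply Finset.prod_le_prod
      · intro ξ hξ; have := haξ ξ hξ; positivity
      · intro ξ hξ
        have ha := haξ ξ hξ
        rw [← div_eq_mul_inv]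
        gcongr
        exact sin_sq_le_one θ
    have huppt : ∀ θ ∈ Set.Icc (0:ℝ) (π/2),
        (∏ ξ ∈ Finset.Icc l L, Real.sin θ ^ 2 / (Real.sin θ ^ 2 + ρ * c / (4 * ξ))) ≤
          Real.sin θ ^ (2*(m+1)) * Cu := by
      intro θ _
      rw [pow_mul, hCudef, ← hprodmul]
      apply Finset.prod_le_prod
      · intro ξ hξ; have := haξ ξ hξ; positivity
      · intro ξ hξ
        have ha := haξ ξ hξ
        rw [show (4*(ξ:ℝ)/(ρ*c)) = (ρ*c/(4*(ξ:ℝ)))⁻¹ from (inv_div _ _).symm, ← div_eq_mul_inv]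
        gcongr
        exact le_add_of_nonneg_left (sq_nonneg _)
    -- integral bounds
    have hInt : IntervalIntegrable (fun θ : ℝ =>
        ∏ ξ ∈ Finset.Icc l L, Real.sin θ ^ 2 / (Real.sin θ ^ 2 + ρ * c / (4 * ξ)))
        MeasureTheory.volume 0 (π/2) := hcont.intervalIntegrable _ _
    have hIlow : (π/2)*Q*Cl ≤ ∫ θ in (0:ℝ)..(π/2),
        ∏ ξ ∈ Finset.Icc l L, Real.sin θ ^ 2 / (Real.sin θ ^ 2 + ρ * c / (4 * ξ)) := by
      have h := intervalIntegral.integral_mono_on (by positivity : (0:ℝ) ≤ π/2)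
        (((continuous_sin.pow _).mul continuous_const).intervalIntegrable _ _) hInt hlowpt
      simp only [Pi.mul_apply, Pi.pow_apply] at h
      rwa [intervalIntegral.integral_mul_const, hW] at h
    have hIup : (∫ θ in (0:ℝ)..(π/2),
        ∏ ξ ∈ Finset.Icc l L, Real.sin θ ^ 2 / (Real.sin θ ^ 2 + ρ * c / (4 * ξ)))
          ≤ (π/2)*Q*Cu := by
      have h := intervalIntegral.integral_mono_on (by positivity : (0:ℝ) ≤ π/2)
        hInt (((continuous_sin.pow _).mul continuous_const).intervalIntegrable _ _) huppt
      simp only [Pi.mul_apply, Pi.pow_apply] at h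
      rwa [intervalIntegral.integral_mul_const, hW] at h
    have hden : (0:ℝ) < (π/2)*Q*Cu := by positivity
    constructor
    · rw [hD ρ, ← hCudef, mul_div_mul_left _ _ (one_div_ne_zero hπ)]
      have h3 : Cl / Cu = ∏ ξ ∈ Finset.Icc l L, (ρ*c/(4*(ξ:ℝ)))/(1+ρ*c/(4*(ξ:ℝ))) := by
        rw [hCldef, hCudef, ← Finset.prod_div_distrib]
        apply Finset.prod_congr rfl
        intro ξ hξ
        have hξ0 := hxi ξ hξ
        have h1a : (0:ℝ) < 1+ρ*c/(4*(ξ:ℝ)) := by positivity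
        rw [div_div_eq_mul_div, inv_mul_eq_div, div_div]
        rw [div_eq_div_iff (by positivity) (by positivity)]
        field_simp
      rw [← h3, show Cl/Cu = ((π/2)*Q*Cl)/((π/2)*Q*Cu) from
        (mul_div_mul_left _ _ (by positivity : ((π:ℝ)/2)*Q ≠ 0)).symm]
      gcongr
    · rw [hD ρ, ← hCudef, mul_div_mul_left _ _ (one_div_ne_zero hπ)]
      exact (div_le_one hden).mpr hIup
  apply tendsto_of_tendsto_of_tendsto_of_le_of_le'
    (g := fun ρ : ℝ => ∏ ξ ∈ Finset.Icc l L, (ρ*c/(4*(ξ:ℝ)))/(1+ρ*c/(4*(ξ:ℝ))))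
    (h := fun _ : ℝ => (1:ℝ))
  · -- g → 1
    have : Tendsto (fun ρ : ℝ => ∏ ξ ∈ Finset.Icc l L, (ρ*c/(4*(ξ:ℝ)))/(1+ρ*c/(4*(ξ:ℝ))))
        atTop (nhds (∏ _ξ ∈ Finset.Icc l L, (1:ℝ))) := by
      apply tendsto_finset_prod
      intro ξ hξ
      have hξ0 : (0:ℝ) < ξ := hxi ξ hξ
      have htop : Tendsto (fun ρ : ℝ => ρ*c/(4*(ξ:ℝ))) atTop atTop := by
        apply Tendsto.atTop_div_const (by positivity)
        exact Tendsto.atTop_mul_const hc tendsto_id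
      have h1 : Tendsto (fun ρ : ℝ => 1 - (1+ρ*c/(4*(ξ:ℝ)))⁻¹) atTop (nhds 1) := by
        have h2 := (tendsto_atTop_add_const_left atTop 1 htop).inv_tendsto_atTop
        simpa using tendsto_const_nhds.sub h2
      apply h1.congr'
      filter_upwards [eventually_gt_atTop 0] with ρ hρ
      have h1a : (0:ℝ) < 1 + ρ*c/(4*(ξ:ℝ)) := by positivity
      field_simp
      ring
    simpa using this
  · exact tendsto_const_nhds
  · filter_upwards [eventually_gt_atTop 0] with ρ hρ
    exact (key ρ hρ).1
  · filter_upwards [eventually_gt_atTop 0] with ρ hρ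
    exact (key ρ hρ).2
end
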